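/- arXiv:1212.5743 — 5 statements merged into one kernel-verified Lean document; each statement's English description precedes it below -/
import Mathlib

section
/- Let G be a topological group and K a compact subgroup. The quotient space G/K (of left cosets, with the quotient topology) is metrizable if and only if K has a countable base of neighborhoods in G. -/
open Filter Set Topology Pointwise

section Aux

variable {G : Type*} [Group G] [TopologicalSpace G] [IsTopologicalGroup G]

/-- Tube lemma for multiplication. -/
lemma aux_mul_tube {K V : Set G} (hK : IsCompact K) (hV : IsOpen V) (hKV : K * K ⊆ V) :
    ∃ A B : Set G, IsOpen A ∧ IsOpen B ∧ K ⊆ A ∧ K ⊆ B ∧ A * B ⊆ V := by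
  obtain ⟨A, B, hA, hB, hKA, hKB, hAB⟩ :=
    generalized_tube_lemma hK hK (hV.preimage continuous_mul)
      (fun p hp => hKV (Set.mul_mem_mul hp.1 hp.2))
  exact ⟨A, B, hA, hB, hKA, hKB, Set.mul_subset_iff.2 fun a ha b hb =>
    hAB (Set.mk_mem_prod ha hb)⟩

/-- For a compact subgroup `K` and open `V ⊇ K`, there is an open `W ⊇ K` with `W K W ⊆ V`. -/
lemma aux_WKW (K : Subgroup G) (hK : IsCompact (K : Set G)) {V : Set G} (hV : IsOpen V)
    (hKV : (K : Set G) ⊆ V) :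
    ∃ W : Set G, IsOpen W ∧ (K : Set G) ⊆ W ∧
      ∀ w ∈ W, ∀ k ∈ (K : Set G), ∀ w' ∈ W, w * (k * w') ∈ V := by
  have hKK : (K : Set G) * (K : Set G) ⊆ V := by
    rw [Set.mul_subset_iff]; intro a ha b hb; exact hKV (mul_mem ha hb)
  obtain ⟨A, B, hA, hB, hKA, hKB, hAB⟩ := aux_mul_tube hK hV hKK
  have hKKB : (K : Set G) * (K : Set G) ⊆ B := by
    rw [Set.mul_subset_iff]; intro a ha b hb; exact hKB (mul_mem ha hb)
  obtain ⟨C, D, hC, hD, hKC, hKD, hCD⟩ := aux_mul_tube hK hB hKKB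
  refine ⟨A ∩ D, hA.inter hD, Set.subset_inter hKA hKD, ?_⟩
  intro w hw k hk w' hw'
  exact hAB (Set.mul_mem_mul hw.1 (hCD (Set.mul_mem_mul (hKC hk) hw'.2)))

variable (K : Subgroup G)

/-- The entourage associated to a set `V ⊆ G`. -/
def auxE (V : Set G) : Set ((G ⧸ K) × (G ⧸ K)) :=
  {p | ∃ x y : G, (x : G ⧸ K) = p.1 ∧ (y : G ⧸ K) = p.2 ∧ x⁻¹ * y ∈ V}

lemma auxE_mono {V W : Set G} (h : V ⊆ W) : auxE K V ⊆ auxE K W := by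
  rintro p ⟨x, y, hx, hy, hxy⟩; exact ⟨x, y, hx, hy, h hxy⟩

/-- The family of open neighborhoods of `K`. -/
def auxS : Set (Set G) := {V | IsOpen V ∧ (K : Set G) ⊆ V}

/-- The uniformity filter on `G ⧸ K`. -/
def auxF : Filter ((G ⧸ K) × (G ⧸ K)) := ⨅ V ∈ auxS K, 𝓟 (auxE K V)

lemma auxF_hasBasis : (auxF K).HasBasis (· ∈ auxS K) (auxE K) := by
  refine Filter.hasBasis_biInf_principal ?_ ⟨Set.univ, isOpen_univ, Set.subset_univ _⟩
  rintro V ⟨hVo, hVK⟩ W ⟨hWo, hWK⟩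
  exact ⟨V ∩ W, ⟨hVo.inter hWo, Set.subset_inter hVK hWK⟩,
    auxE_mono K Set.inter_subset_left, auxE_mono K Set.inter_subset_right⟩

lemma auxE_mem_F {V : Set G} (hV : V ∈ auxS K) : auxE K V ∈ auxF K :=
  (auxF_hasBasis K).mem_of_mem hV

/-- The uniform space structure on `G ⧸ K`, compatible with the quotient topology. -/
def auxUniformSpace (hK : IsCompact (K : Set G)) : UniformSpace (G ⧸ K) where
  toTopologicalSpace := inferInstance
  uniformity := auxF K
  symm := by
    show Filter.map Prod.swap (auxF K) ≤ auxF K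
    refine (auxF_hasBasis K).ge_iff.2 ?_
    rintro V ⟨hVo, hVK⟩
    rw [Filter.mem_map]
    refine Filter.mem_of_superset
      (auxE_mem_F K (V := V ∩ V⁻¹)
        ⟨hVo.inter hVo.inv, Set.subset_inter hVK (fun k hk => Set.mem_inv.2 (hVK (inv_mem hk)))⟩) ?_
    rintro ⟨p, q⟩ ⟨x, y, hx, hy, hxy⟩
    exact ⟨y, x, hy, hx, by simpa using hxy.2⟩
  comp := by
    refine (auxF_hasBasis K).ge_iff.2 ?_
    rintro V ⟨hVo, hVK⟩
    obtain ⟨W, hWo, hKW, hW⟩ := aux_WKW K hK hVo hVK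
    refine Filter.mem_of_superset (Filter.mem_lift' (auxE_mem_F K ⟨hWo, hKW⟩)) ?_
    rintro ⟨p, q⟩ ⟨r, ⟨x, y, hx, hy, hxy⟩, ⟨y', z, hy', hz, hyz⟩⟩
    refine ⟨x, z, hx, hz, ?_⟩
    have hk : y⁻¹ * y' ∈ K := QuotientGroup.eq.mp (hy.trans hy'.symm)
    have := hW _ hxy _ hk _ hyz
    simpa [mul_assoc] using this
  nhds_eq_comap_uniformity := by
    intro p
    obtain ⟨x, rfl⟩ := QuotientGroup.mk_surjective p
    refine le_antisymm ?_ ?_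
    · -- 𝓝 ≤ comap : every comap-set is a neighborhood
      intro s hs
      rw [((auxF_hasBasis K).comap (Prod.mk (x : G ⧸ K))).mem_iff] at hs
      obtain ⟨V, ⟨hVo, hVK⟩, hsub⟩ := hs
      have hTopen : IsOpen (QuotientGroup.mk '' (x • ((K : Set G) * V)) : Set (G ⧸ K)) :=
        QuotientGroup.isOpenMap_coe _ ((hVo.mul_left).smul x)
      have hxmem : (x : G ⧸ K) ∈ QuotientGroup.mk '' (x • ((K : Set G) * V)) :=
        ⟨x * (1 * 1), ⟨1 * 1, Set.mul_mem_mul (one_mem K) (hVK (one_mem K)), rfl⟩, by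
          simp⟩
      refine Filter.mem_of_superset (hTopen.mem_nhds hxmem) (le_trans ?_ hsub)
      rintro q ⟨g, ⟨u, hu, rfl⟩, rfl⟩
      obtain ⟨k, hk, v, hv, rfl⟩ := hu
      refine ⟨x * k, x * (k * v), ?_, by simp [smul_eq_mul, mul_assoc], ?_⟩
      · exact (QuotientGroup.eq.mpr (by simpa using inv_mem hk)).symm
      · simpa [mul_assoc] using hv
    · -- comap ≤ 𝓝
      intro s hs
      obtain ⟨O, hOs, hOopen, hxO⟩ := mem_nhds_iff.mp hs
      set U : Set G := QuotientGroup.mk ⁻¹' O with hU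
      have hUopen : IsOpen U := hOopen.preimage continuous_quot_mk
      have hU' : IsOpen ((x⁻¹ : G) • U) := hUopen.smul _
      have hKU' : (K : Set G) * (K : Set G) ⊆ (x⁻¹ : G) • U := by
        rw [Set.mul_subset_iff]
        intro a ha b hb
        refine Set.mem_smul_set.2 ⟨x * (a * b), ?_, by simp [mul_assoc]⟩
        show ((x * (a * b) : G) : G ⧸ K) ∈ O
        have : ((x * (a * b) : G) : G ⧸ K) = (x : G ⧸ K) :=
          QuotientGroup.eq.mpr (by simpa using inv_mem (mul_mem ha hb))
        rwa [this]
      obtain ⟨A, B, hA, hB, hKA, hKB, hAB⟩ := aux_mul_tube hK hU' hKU'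
      refine Filter.mem_of_superset
        (Filter.preimage_mem_comap (auxE_mem_F K ⟨hB, hKB⟩)) ?_
      rintro q ⟨a, b, ha, hb, hab⟩
      have hk : x⁻¹ * a ∈ K := by
        have h1 := QuotientGroup.eq.mp (ha : (a : G ⧸ K) = (x : G ⧸ K))
        simpa using inv_mem h1
      have hmem : (x⁻¹ : G) • b ∈ (x⁻¹ : G) • U := by
        have h2 := hAB (Set.mul_mem_mul (hKA hk) hab)
        simpa [smul_eq_mul, mul_assoc] using h2
      have hbU : b ∈ U := Set.smul_mem_smul_set_iff.mp hmem
      have hbO : (b : G ⧸ K) ∈ O := hbU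
      rw [hb] at hbO
      exact hOs hbO

/-- If the neighborhood filter of `K` has a countable basis of open sets, the uniformity is
countably generated. -/
lemma auxF_countably_generated (B : ℕ → Set G)
    (h1 : ∀ n, IsOpen (B n) ∧ (K : Set G) ⊆ B n)
    (h2 : ∀ U : Set G, IsOpen U → (K : Set G) ⊆ U → ∃ n, B n ⊆ U) :
    (auxF K).IsCountablyGenerated := by
  have hEq : auxF K = ⨅ n : ℕ, 𝓟 (auxE K (B n)) := by
    refine le_antisymm (le_iInf fun n => ?_) ?_
    · exact Filter.le_principal_iff.2 (auxE_mem_F K ⟨(h1 n).1, (h1 n).2⟩)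
    · refine le_iInf₂ fun V hV => ?_
      obtain ⟨n, hn⟩ := h2 V hV.1 hV.2
      exact le_trans (iInf_le _ n) (Filter.principal_mono.2 (auxE_mono K hn))
  rw [hEq]
  infer_instance

/-- `G ⧸ K` is T1 when `K` is compact (in a T2 group). -/
lemma aux_t1 [T2Space G] (hK : IsCompact (K : Set G)) : T1Space (G ⧸ K) := by
  constructor
  intro p
  obtain ⟨x, rfl⟩ := QuotientGroup.mk_surjective p
  rw [← (QuotientGroup.isQuotientMap_mk K).isClosed_preimage]
  have : (QuotientGroup.mk ⁻¹' {(x : G ⧸ K)} : Set G) = x • (K : Set G) := by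
    ext y
    simp only [Set.mem_preimage, Set.mem_singleton_iff]
    constructor
    · intro h
      have hm := QuotientGroup.eq.mp h
      exact Set.mem_smul_set.2 ⟨x⁻¹ * y, by simpa using inv_mem hm, by simp [smul_eq_mul]⟩
    · rintro ⟨k, hk, rfl⟩
      exact QuotientGroup.eq.mpr (by simpa using hk)
  rw [this]
  exact (hK.isClosed).smul x

end Aux

/-- Transfer metrizability along a uniform structure compatible with the topology. -/
lemma aux_metrizable_transfer {X : Type*} [t : TopologicalSpace X] (u : UniformSpace X)
    (hut : u.toTopologicalSpace = t) (hcg : Filter.IsCountablyGenerated (@uniformity X u))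
    (h0 : T0Space X) : TopologicalSpace.MetrizableSpace X := by
  subst hut
  exact @UniformSpace.metrizableSpace X u hcg h0


/-- For a compact subgroup `K` of a Hausdorff topological group `G`, the left coset space
`G/K` is metrizable iff `K` has a countable base of neighborhoods in `G`. -/
theorem quotient_metrizable_iff_countable_nbhd_base {G : Type*} [Group G]
    [TopologicalSpace G] [IsTopologicalGroup G] [T2Space G] (K : Subgroup G)
    (hK : IsCompact (K : Set G)) :
    TopologicalSpace.MetrizableSpace (G ⧸ K) ↔
      ∃ B : ℕ → Set G, (∀ n, IsOpen (B n) ∧ (K : Set G) ⊆ B n) ∧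
        ∀ U : Set G, IsOpen U → (K : Set G) ⊆ U → ∃ n, B n ⊆ U := by
  constructor
  · intro hmet
    haveI := hmet
    haveI : FirstCountableTopology (G ⧸ K) :=
      TopologicalSpace.PseudoMetrizableSpace.firstCountableTopology
    obtain ⟨s, hs⟩ := (𝓝 ((1 : G) : G ⧸ K)).exists_antitone_basis
    refine ⟨fun n => interior (QuotientGroup.mk ⁻¹' s n), fun n => ⟨isOpen_interior, ?_⟩, ?_⟩
    · intro k hk
      rw [mem_interior_iff_mem_nhds]
      have h1 : ((k : G) : G ⧸ K) = ((1 : G) : G ⧸ K) :=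
        QuotientGroup.eq.mpr (by simpa using inv_mem hk)
      have h2 : s n ∈ 𝓝 ((k : G) : G ⧸ K) := by
        rw [h1]; exact hs.toHasBasis.mem_of_mem trivial
      exact continuous_quot_mk.continuousAt.preimage_mem_nhds h2
    · intro U hU hKU
      have hcl : IsClosed (QuotientGroup.mk '' Uᶜ : Set (G ⧸ K)) :=
        QuotientGroup.isClosedMap_coe hK _ hU.isClosed_compl
      have hmem : (QuotientGroup.mk '' Uᶜ)ᶜ ∈ 𝓝 ((1 : G) : G ⧸ K) := by
        refine hcl.isOpen_compl.mem_nhds ?_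
        rintro ⟨y, hyU, hy⟩
        have : y ∈ K := by simpa using QuotientGroup.eq.mp hy
        exact hyU (hKU this)
      obtain ⟨n, -, hn⟩ := hs.toHasBasis.mem_iff.mp hmem
      refine ⟨n, fun g hg => ?_⟩
      have hg' : g ∈ QuotientGroup.mk ⁻¹' s n := interior_subset hg
      have : (g : G ⧸ K) ∈ (QuotientGroup.mk '' Uᶜ)ᶜ := hn hg'
      by_contra hgU
      exact this ⟨g, hgU, rfl⟩
  · rintro ⟨B, h1, h2⟩
    haveI : T1Space (G ⧸ K) := aux_t1 K hK
    exact aux_metrizable_transfer (auxUniformSpace K hK) rfl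
      (auxF_countably_generated K B h1 h2) inferInstance
end

section
/- Let G be an ω-narrow topological group acting transitively and continuously by isometries on a metric space X. Then X is separable. -/
open Pointwise

/-- If an ω-narrow topological group acts transitively and continuously by isometries on a
metric space `X`, then `X` is separable. -/
theorem separable_of_omegaNarrow_transitive_isometric_action {G X : Type*} [Group G]
    [TopologicalSpace G] [IsTopologicalGroup G] [MetricSpace X] [MulAction G X]
    (hnarrow : ∀ U ∈ nhds (1 : G), ∃ A : Set G, A.Countable ∧ A * U = Set.univ)
    (hiso : ∀ g : G, Isometry (fun x : X => g • x))
    (hcont : Continuous (fun p : G × X => p.1 • p.2))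
    (htrans : ∀ x y : X, ∃ g : G, g • x = y) :
    TopologicalSpace.SeparableSpace X := by
  rcases isEmpty_or_nonempty X with hX | ⟨⟨x₀⟩⟩
  · infer_instance
  · set U : ℕ → Set G := fun n => {g | dist (g • x₀) x₀ < 1 / (n + 1)} with hU
    have hUnhds : ∀ n, U n ∈ nhds (1 : G) := by
      intro n
      have hc : Continuous (fun g : G => dist (g • x₀) x₀) := by
        apply Continuous.dist _ continuous_const
        exact hcont.comp (continuous_id.prodMk continuous_const)
      have : IsOpen (U n) := isOpen_lt hc continuous_const
      refine this.mem_nhds ?_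
      simp only [hU, Set.mem_setOf_eq, one_smul, dist_self]
      positivity
    choose A hAc hAU using fun n => hnarrow (U n) (hUnhds n)
    refine ⟨⟨⋃ n, (fun g => g • x₀) '' A n, ?_, ?_⟩⟩
    · exact Set.countable_iUnion fun n => (hAc n).image _
    · rw [Metric.dense_iff]
      intro y r hr
      obtain ⟨n, hn⟩ := exists_nat_one_div_lt hr
      obtain ⟨g, hg⟩ := htrans x₀ y
      have hgmem : g ∈ A n * U n := by rw [hAU n]; trivial
      obtain ⟨a, ha, u, hu, rfl⟩ := hgmem
      refine ⟨a • x₀, ?_, Set.mem_iUnion.2 ⟨n, ⟨a, ha, rfl⟩⟩⟩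
      rw [Metric.mem_ball]
      have heq : dist (a • x₀) ((a * u) • x₀) = dist x₀ (u • x₀) := by
        rw [mul_smul]
        exact (hiso a).dist_eq _ _
      rw [← hg, heq, dist_comm]
      exact lt_trans hu hn
end

section
/- Let G be an ω-narrow almost metrizable Hausdorff topological group. Then for every neighborhood O of the identity there exists a compact normal subgroup K ⊆ O of G such that the quotient group G/K is metrizable. -/
open Pointwise

section Aux

variable {G : Type*} [Group G] [TopologicalSpace G] [IsTopologicalGroup G]

/-- From any neighborhood of `1` one can extract an open symmetric neighborhood whose
triple products stay inside. -/
lemma exists_symm_tri_nhds {N : Set G} (hN : N ∈ nhds (1 : G)) :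
    ∃ W : Set G, IsOpen W ∧ (1 : G) ∈ W ∧ (∀ x ∈ W, x⁻¹ ∈ W) ∧
      ∀ a ∈ W, ∀ b ∈ W, ∀ c ∈ W, a * b * c ∈ N := by
  obtain ⟨V, hVo, hV1, hVN⟩ := exists_open_nhds_one_mul_subset hN
  obtain ⟨V', hV'o, hV'1, hV'V⟩ :=
    exists_open_nhds_one_mul_subset (hVo.mem_nhds hV1)
  refine ⟨(V' ∩ V) ∩ (V' ∩ V)⁻¹, ((hV'o.inter hVo).inter (hV'o.inter hVo).inv), ?_, ?_, ?_⟩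
  · simp [hV'1, hV1]
  · rintro x ⟨hx1, hx2⟩
    exact ⟨hx2, by simpa using hx1⟩
  · rintro a ⟨⟨ha1, -⟩, -⟩ b ⟨⟨hb1, -⟩, -⟩ c ⟨⟨-, hc2⟩, -⟩
    exact hVN (Set.mul_mem_mul (hV'V (Set.mul_mem_mul ha1 hb1)) hc2)

/-- The projection onto the coset space of a compact subgroup is a proper map. -/
lemma isProperMap_quotient_mk_of_isCompact (L : Subgroup G) (hL : IsCompact (L : Set G)) :
    IsProperMap (QuotientGroup.mk : G → G ⧸ L) := by
  rw [isProperMap_iff_isClosedMap_and_compact_fibers]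
  refine ⟨QuotientGroup.continuous_mk, QuotientGroup.isClosedMap_coe hL, fun y => ?_⟩
  obtain ⟨g, rfl⟩ := QuotientGroup.mk_surjective y
  have : (QuotientGroup.mk : G → G ⧸ L) ⁻¹' {QuotientGroup.mk g} = {g} * (L : Set G) := by
    rw [← Set.image_singleton, QuotientGroup.preimage_image_mk_eq_mul]
  rw [this]
  exact isCompact_singleton.mul hL

end Aux

/-- In an ω-narrow almost metrizable Hausdorff topological group, every neighborhood of the
identity contains a compact *normal* subgroup with metrizable quotient. (The almost
metrizability is used in the form of Pasynkov's theorem: every identity neighborhood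
contains a compact subgroup with metrizable quotient.) -/
theorem exists_compact_normal_subgroup_metrizable_quotient {G : Type*} [Group G]
    [TopologicalSpace G] [IsTopologicalGroup G] [T2Space G]
    (hnarrow : ∀ U ∈ nhds (1 : G), ∃ A : Set G, A.Countable ∧ A * U = Set.univ)
    (halm : ∀ O ∈ nhds (1 : G), ∃ L : Subgroup G, (L : Set G) ⊆ O ∧
      IsCompact (L : Set G) ∧ TopologicalSpace.MetrizableSpace (G ⧸ L)) :
    ∀ O ∈ nhds (1 : G), ∃ K : Subgroup G, (K : Set G) ⊆ O ∧ IsCompact (K : Set G) ∧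
      K.Normal ∧ TopologicalSpace.MetrizableSpace (G ⧸ K) := by
  intro O hO
  obtain ⟨L, hLO, hLcomp, hLmet⟩ := halm O hO
  haveI := hLmet
  set π : G → G ⧸ L := QuotientGroup.mk with hπ
  have hπcont : Continuous π := QuotientGroup.continuous_mk
  -- a countable antitone basis at the image of 1 in G ⧸ L
  obtain ⟨B, hB⟩ := (nhds (π 1)).exists_antitone_basis
  have hBmem : ∀ n, π ⁻¹' B n ∈ nhds (1 : G) :=
    fun n => hπcont.continuousAt.preimage_mem_nhds (hB.toHasBasis.mem_of_mem trivial)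
  -- the chain of symmetric neighborhoods
  have hrec : ∀ T : Set G, ∃ W : Set G, T ∈ nhds (1 : G) →
      IsOpen W ∧ (1 : G) ∈ W ∧ (∀ x ∈ W, x⁻¹ ∈ W) ∧
        ∀ a ∈ W, ∀ b ∈ W, ∀ c ∈ W, a * b * c ∈ T := by
    intro T
    by_cases hT : T ∈ nhds (1 : G)
    · obtain ⟨W, h1, h2, h3, h4⟩ := exists_symm_tri_nhds hT
      exact ⟨W, fun _ => ⟨h1, h2, h3, h4⟩⟩
    · exact ⟨∅, fun h => absurd h hT⟩
  choose stp hstp using hrec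
  set V : ℕ → Set G := fun n =>
    Nat.rec (stp (O ∩ π ⁻¹' B 0)) (fun n Vn => stp (Vn ∩ π ⁻¹' B (n + 1))) n with hV
  -- basic properties of V
  have hVprops : ∀ n, IsOpen (V n) ∧ (1 : G) ∈ V n ∧ (∀ x ∈ V n, x⁻¹ ∈ V n) ∧
      V n ⊆ π ⁻¹' B n ∧ (n = 0 → V n ⊆ O) := by
    intro n
    induction n with
    | zero =>
      have hmem : O ∩ π ⁻¹' B 0 ∈ nhds (1 : G) := Filter.inter_mem hO (hBmem 0)
      obtain ⟨h1, h2, h3, h4⟩ := hstp _ hmem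
      have hsub : V 0 ⊆ O ∩ π ⁻¹' B 0 := fun w hw => by
        simpa using h4 w hw 1 h2 1 h2
      exact ⟨h1, h2, h3, fun x hx => (hsub hx).2, fun _ => fun x hx => (hsub hx).1⟩
    | succ n ih =>
      have hmem : V n ∩ π ⁻¹' B (n + 1) ∈ nhds (1 : G) :=
        Filter.inter_mem ((ih.1).mem_nhds ih.2.1) (hBmem (n + 1))
      obtain ⟨h1, h2, h3, h4⟩ := hstp _ hmem
      have hsub : V (n + 1) ⊆ V n ∩ π ⁻¹' B (n + 1) := fun w hw => by
        simpa using h4 w hw 1 h2 1 h2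
      exact ⟨h1, h2, h3, fun x hx => (hsub hx).2, by omega⟩
  have hVopen : ∀ n, IsOpen (V n) := fun n => (hVprops n).1
  have hV1 : ∀ n, (1 : G) ∈ V n := fun n => (hVprops n).2.1
  have hVsymm : ∀ n, ∀ x ∈ V n, x⁻¹ ∈ V n := fun n => (hVprops n).2.2.1
  have hVB : ∀ n, V n ⊆ π ⁻¹' B n := fun n => (hVprops n).2.2.2.1
  have hV0O : V 0 ⊆ O := (hVprops 0).2.2.2.2 rfl
  have hVnhds : ∀ n, V n ∈ nhds (1 : G) := fun n => (hVopen n).mem_nhds (hV1 n)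
  have htri : ∀ n, ∀ a ∈ V (n + 1), ∀ b ∈ V (n + 1), ∀ c ∈ V (n + 1), a * b * c ∈ V n := by
    intro n
    have hmem : V n ∩ π ⁻¹' B (n + 1) ∈ nhds (1 : G) :=
      Filter.inter_mem ((hVopen n).mem_nhds (hV1 n)) (hBmem (n + 1))
    intro a ha b hb c hc
    exact ((hstp _ hmem).2.2.2 a ha b hb c hc).1
  have hVmono : ∀ n, V (n + 1) ⊆ V n := by
    intro n w hw
    simpa using htri n w hw 1 (hV1 (n + 1)) 1 (hV1 (n + 1))
  have hVanti : Antitone V := antitone_nat_of_succ_le hVmono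
  -- the countable set of conjugators
  have hA : ∀ n : ℕ, ∃ A : Set G, A.Countable ∧
      ∀ g : G, ∃ b ∈ A, ∃ v ∈ V n, g = b * v := by
    intro n
    obtain ⟨A, hAc, hAU⟩ := hnarrow (V n) (hVnhds n)
    refine ⟨A, hAc, fun g => ?_⟩
    have : g ∈ A * V n := hAU ▸ Set.mem_univ g
    obtain ⟨b, hb, v, hv, hbv⟩ := this
    exact ⟨b, hb, v, hv, hbv.symm⟩
  choose A hAc hAdec using hA
  have hAinf : (insert (1 : G) (⋃ n, A n)).Countable :=
    (Set.countable_iUnion hAc).insert 1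
  obtain ⟨a, ha⟩ := hAinf.exists_eq_range ⟨1, Set.mem_insert _ _⟩
  have hdecomp : ∀ (g : G) (n : ℕ), ∃ (i : ℕ) (v : G), v ∈ V n ∧ g = a i * v := by
    intro g n
    obtain ⟨b, hb, v, hv, hbv⟩ := hAdec n g
    have : b ∈ Set.range a := ha ▸ Set.mem_insert_iff.mpr (Or.inr (Set.mem_iUnion.2 ⟨n, hb⟩))
    obtain ⟨i, rfl⟩ := this
    exact ⟨i, v, hv, hbv⟩
  -- the approximating open sets C n and the subgroup K
  set C : ℕ → Set G := fun n =>
    V n ∩ ⋂ i ∈ Set.Iic n, (fun x => (a i)⁻¹ * x * a i) ⁻¹' V n with hC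
  have hconjcont : ∀ i : ℕ, Continuous (fun x : G => (a i)⁻¹ * x * a i) :=
    fun i => (continuous_const.mul continuous_id).mul continuous_const
  have hCopen : ∀ n, IsOpen (C n) := by
    intro n
    exact (hVopen n).inter <| (Set.finite_Iic n).isOpen_biInter
      fun i _ => (hVopen n).preimage (hconjcont i)
  have hC1 : ∀ n, (1 : G) ∈ C n := by
    intro n
    refine ⟨hV1 n, Set.mem_biInter fun i _ => ?_⟩
    simpa using hV1 n
  have hCV : ∀ n, C n ⊆ V n := fun n => Set.inter_subset_left
  have hCmem : ∀ n, ∀ x ∈ C n, ∀ i ≤ n, (a i)⁻¹ * x * a i ∈ V n := by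
    intro n x hx i hi
    exact Set.mem_iInter₂.mp hx.2 i hi
  have hCanti : Antitone C := by
    intro m n hmn x hx
    refine ⟨hVanti hmn (hCV n hx), Set.mem_biInter fun i hi => ?_⟩
    exact hVanti hmn (hCmem n x hx i (le_trans hi hmn))
  set Kset : Set G := {x | ∀ (g : G) (n : ℕ), g⁻¹ * x * g ∈ V n} with hKset
  have hKsetV : ∀ x ∈ Kset, ∀ n, x ∈ V n := by
    intro x hx n
    simpa using hx 1 n
  have hKC : Kset = ⋂ n, C n := by
    ext x
    constructor
    · intro hx
      refine Set.mem_iInter.2 fun n => ⟨hKsetV x hx n, Set.mem_biInter fun i _ => hx (a i) n⟩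
    · intro hx g n
      obtain ⟨i, v, hv, rfl⟩ := hdecomp g (n + 1)
      have hxm : x ∈ C (max (n + 1) i) := Set.mem_iInter.1 hx _
      have h1 : (a i)⁻¹ * x * a i ∈ V (n + 1) :=
        hVanti (le_max_left _ _) (hCmem _ x hxm i (le_max_right _ _))
      have h2 : v⁻¹ * ((a i)⁻¹ * x * a i) * v ∈ V n :=
        htri n v⁻¹ (hVsymm (n + 1) v hv) _ h1 v hv
      have : (a i * v)⁻¹ * x * (a i * v) = v⁻¹ * ((a i)⁻¹ * x * a i) * v := by group
      rw [this]
      exact h2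
  -- K is a normal subgroup
  set K : Subgroup G :=
    { carrier := Kset
      one_mem' := by
        intro g n
        simpa using hV1 n
      mul_mem' := by
        intro x y hx hy g n
        have h1 : g⁻¹ * x * g ∈ V (n + 1) := hx g (n + 1)
        have h2 : g⁻¹ * y * g ∈ V (n + 1) := hy g (n + 1)
        have := htri n _ h1 _ h2 1 (hV1 (n + 1))
        have heq : g⁻¹ * x * g * (g⁻¹ * y * g) * 1 = g⁻¹ * (x * y) * g := by group
        rwa [heq] at this
      inv_mem' := by
        intro x hx g n
        have := hVsymm n _ (hx g n)
        have heq : (g⁻¹ * x * g)⁻¹ = g⁻¹ * x⁻¹ * g := by group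
        rwa [heq] at this } with hK
  have hKnormal : K.Normal := by
    constructor
    intro x hx g h n
    have := hx (g⁻¹ * h) n
    have heq : (g⁻¹ * h)⁻¹ * x * (g⁻¹ * h) = h⁻¹ * (g * x * g⁻¹) * h := by group
    rwa [heq] at this
  have hKcarrier : (K : Set G) = Kset := rfl
  -- closedness and compactness of K
  have hclV : ∀ n, closure (V (n + 1)) ⊆ V n := by
    intro n x hx
    have hxV : (fun y => x * y) '' V (n + 1) ∈ nhds x := by
      refine IsOpen.mem_nhds ((hVopen (n + 1)).smul x) ?_
      exact ⟨1, hV1 (n + 1), mul_one x⟩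
    obtain ⟨y, hyim, hyV⟩ := mem_closure_iff_nhds.1 hx _ hxV
    obtain ⟨u, hu, rfl⟩ := hyim
    have : (x * u) * u⁻¹ * 1 ∈ V n :=
      htri n _ hyV _ (hVsymm (n + 1) u hu) 1 (hV1 (n + 1))
    simpa using this
  have hclC : ∀ n, closure (C (n + 1)) ⊆ C n := by
    intro n x hx
    constructor
    · exact hclV n (closure_mono (hCV (n + 1)) hx)
    · refine Set.mem_biInter fun i hi => ?_
      have hsub : C (n + 1) ⊆ (fun x => (a i)⁻¹ * x * a i) ⁻¹' V (n + 1) :=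
        fun z hz => hCmem (n + 1) z hz i (le_trans hi (Nat.le_succ n))
      have h1 : x ∈ closure ((fun x => (a i)⁻¹ * x * a i) ⁻¹' V (n + 1)) :=
        closure_mono hsub hx
      have h2 := (hconjcont i).closure_preimage_subset _ h1
      exact hclV n h2
  have hKCsub : ∀ n, Kset ⊆ C n := by
    intro n x hx
    have hx' : x ∈ ⋂ m, C m := hKC ▸ hx
    exact Set.mem_iInter.1 hx' n
  have hKclosed : IsClosed Kset := by
    have heq : Kset = ⋂ n, closure (C n) := by
      apply Set.Subset.antisymm
      · exact Set.subset_iInter fun n => (hKCsub n).trans subset_closure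
      · intro x hx
        rw [hKC]
        exact Set.mem_iInter.2 fun n => hclC n (Set.mem_iInter.1 hx (n + 1))
    rw [heq]
    exact isClosed_iInter fun n => isClosed_closure
  have hKL : Kset ⊆ (L : Set G) := by
    intro x hx
    have hxB : ∀ n, π x ∈ B n := fun n => hVB n (hKsetV x hx n)
    have hπx : π x = π 1 := by
      by_contra hne
      have : {π x}ᶜ ∈ nhds (π 1) :=
        IsOpen.mem_nhds isClosed_singleton.isOpen_compl (by simpa using Ne.symm hne)
      obtain ⟨n, -, hn⟩ := hB.toHasBasis.mem_iff.1 this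
      exact hn (hxB n) rfl
    have : (1 : G)⁻¹ * x ∈ L := by
      rw [← QuotientGroup.eq]
      exact hπx.symm
    simpa using this
  have hKcomp : IsCompact Kset := hLcomp.of_isClosed_subset hKclosed hKL
  have hKO : Kset ⊆ O := fun x hx => hV0O (hKsetV x hx 0)
  -- the key basis property
  have hbase : ∀ T : Set G, IsOpen T → Kset ⊆ T → ∃ n, C n ⊆ T := by
    intro T hTopen hKT
    by_contra hcon
    push_neg at hcon
    choose x hxC hxT using fun n => Set.not_subset.1 (hcon n)
    have hπxB : ∀ n, (π ∘ x) n ∈ B n := fun n => hVB n (hCV n (hxC n))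
    have htendsto : Filter.Tendsto (π ∘ x) Filter.atTop (nhds (π 1)) := hB.tendsto hπxB
    have hScomp : IsCompact (insert (π 1) (Set.range (π ∘ x))) :=
      htendsto.isCompact_insert_range
    have hTKcomp : IsCompact (π ⁻¹' insert (π 1) (Set.range (π ∘ x))) :=
      (isProperMap_quotient_mk_of_isCompact L hLcomp).isCompact_preimage hScomp
    have hle : Filter.map x Filter.atTop ≤ Filter.principal
        (π ⁻¹' insert (π 1) (Set.range (π ∘ x))) := by
      rw [Filter.le_principal_iff, Filter.mem_map]
      exact Filter.Eventually.of_forall fun n =>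
        Set.mem_preimage.2 (Set.mem_insert_iff.2 (Or.inr ⟨n, rfl⟩))
    obtain ⟨y, -, hy⟩ := hTKcomp hle
    have hyK : y ∈ Kset := by
      rw [hKC]
      refine Set.mem_iInter.2 fun n => hclC n ?_
      have hmem : C (n + 1) ∈ Filter.map x Filter.atTop := by
        rw [Filter.mem_map]
        filter_upwards [Filter.eventually_ge_atTop (n + 1)] with m hm
        exact hCanti hm (hxC m)
      exact mem_closure_iff_clusterPt.2 (hy.mono (Filter.le_principal_iff.2 hmem))
    have hTn : T ∈ nhds y := hTopen.mem_nhds (hKT hyK)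
    have hTc : Tᶜ ∈ Filter.map x Filter.atTop := by
      rw [Filter.mem_map]
      exact Filter.Eventually.of_forall fun n => hxT n
    have : (T ∩ Tᶜ : Set G) ∈ nhds y ⊓ Filter.map x Filter.atTop :=
      Filter.inter_mem (Filter.mem_inf_of_left hTn) (Filter.mem_inf_of_right hTc)
    rw [Set.inter_compl_self] at this
    exact hy.ne (Filter.empty_mem_iff_bot.1 this)
  -- instances on the quotient
  haveI hKn : K.Normal := hKnormal
  haveI : T3Space (G ⧸ K) := QuotientGroup.instT3Space (N := K) (hN := hKclosed)
  set ρ : G → G ⧸ K := QuotientGroup.mk with hρ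
  have hρ1 : (1 : G ⧸ K) = ρ 1 := rfl
  have hnhds : nhds (1 : G ⧸ K) = Filter.map ρ (nhds (1 : G)) := by
    rw [hρ1]
    exact QuotientGroup.nhds_eq K 1
  have hqb : (nhds (1 : G ⧸ K)).HasBasis (fun _ : ℕ => True) (fun n => ρ '' C n) := by
    rw [hnhds]
    constructor
    intro t
    constructor
    · intro ht
      rw [Filter.mem_map] at ht
      set T : Set G := ρ ⁻¹' t with hT
      have hsat : ∀ w ∈ T, ∀ k ∈ Kset, w * k ∈ T := by
        intro w hw k hk
        have hmul : ρ (w * k) = ρ w := QuotientGroup.mk_mul_of_mem w hk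
        show ρ (w * k) ∈ t
        rw [hmul]
        exact hw
      have hKint : Kset ⊆ interior T := by
        intro k hk
        rw [mem_interior]
        refine ⟨(fun y => y * k) '' interior T, ?_, (isOpenMap_mul_right k)
          _ isOpen_interior, ⟨1, mem_interior_iff_mem_nhds.2 ht, one_mul k⟩⟩
        rintro - ⟨u, hu, rfl⟩
        exact hsat u (interior_subset hu) k hk
      obtain ⟨n, hn⟩ := hbase (interior T) isOpen_interior hKint
      refine ⟨n, trivial, ?_⟩
      rintro - ⟨c, hc, rfl⟩
      exact Set.mem_preimage.1 (interior_subset (hn hc))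
    · rintro ⟨n, -, hn⟩
      rw [Filter.mem_map]
      refine Filter.mem_of_superset ((hCopen n).mem_nhds (hC1 n)) ?_
      intro c hc
      exact hn ⟨c, hc, rfl⟩
  haveI hcg : (nhds (1 : G ⧸ K)).IsCountablyGenerated := hqb.isCountablyGenerated
  letI : UniformSpace (G ⧸ K) := IsTopologicalGroup.rightUniformSpace (G ⧸ K)
  haveI : (uniformity (G ⧸ K)).IsCountablyGenerated := by
    rw [uniformity_eq_comap_nhds_one']
    exact Filter.comap.isCountablyGenerated _ _
  have hmet : TopologicalSpace.MetrizableSpace (G ⧸ K) := UniformSpace.metrizableSpace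
  exact ⟨K, hKO, hKcomp, hKnormal, hmet⟩
end

section
/- Let G be a topological group and L a compact subgroup with a countable neighborhood base (U_n) in G satisfying U_n = U_n⁻¹ = U_n L and U_{n+1}² ⊆ U_n. Then there exists a metric d on the coset space G/L compatible with the quotient topology which is invariant under the left translation action of G. -/
open Pointwise

open Set NNReal List

/-- Given a compact subgroup `L` of a topological group `G` with a countable neighborhood
base `(U n)` satisfying `U n = (U n)⁻¹ = U n * L` and `U (n+1) * U (n+1) ⊆ U n`, there is a
metric on `G ⧸ L` compatible with the quotient topology and invariant under the left
translation action of `G`. -/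

theorem exists_invariant_compatible_metric {G : Type*} [Group G] [TopologicalSpace G]
    [IsTopologicalGroup G] [T2Space G] (L : Subgroup G) (hL : IsCompact (L : Set G))
    (U : ℕ → Set G)
    (hopen : ∀ n, IsOpen (U n) ∧ (L : Set G) ⊆ U n)
    (hbase : ∀ V : Set G, IsOpen V → (L : Set G) ⊆ V → ∃ n, U n ⊆ V)
    (hsymm : ∀ n, U n = (U n)⁻¹)
    (hUL : ∀ n, U n = U n * (L : Set G))
    (hsq : ∀ n, U (n + 1) * U (n + 1) ⊆ U n) :
    ∃ d : (G ⧸ L) → (G ⧸ L) → ℝ,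
      (∀ a b, d a b = 0 ↔ a = b) ∧
      (∀ a b, d a b = d b a) ∧
      (∀ a b c, d a c ≤ d a b + d b c) ∧
      (∀ a : G ⧸ L, ∀ s : Set (G ⧸ L),
        s ∈ nhds a ↔ ∃ ε > 0, {b | d a b < ε} ⊆ s) ∧
      (∀ g : G, ∀ a b : G ⧸ L, d (g • a) (g • b) = d a b) := by
  classical
  have hone : ∀ n, (1 : G) ∈ U n := fun n => (hopen n).2 L.one_mem
  have hmono : ∀ n, U (n + 1) ⊆ U n := by
    intro n x hx
    have : x * 1 ∈ U (n + 1) * U (n + 1) := Set.mul_mem_mul hx (hone (n + 1))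
    simpa using hsq n this
  have hanti : Antitone U := antitone_nat_of_succ_le hmono
  have hinvmem : ∀ {n : ℕ} {z : G}, z ∈ U n ↔ z⁻¹ ∈ U n := by
    intro n z
    constructor
    · intro h; rw [hsymm n]; exact Set.inv_mem_inv.2 h
    · intro h; have := Set.inv_mem_inv.2 h; rwa [inv_inv, ← hsymm n] at this
  have hLU : ∀ n, (L : Set G) * U n = U n := by
    intro n
    have h1 : ((U n * (L : Set G)))⁻¹ = (L : Set G) * U n := by
      rw [mul_inv_rev, inv_coe_set, ← hsymm n]
    rw [← hUL n, ← hsymm n] at h1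
    exact h1.symm
  have hmemL : ∀ {n : ℕ} {l z m : G}, l ∈ L → m ∈ L → z ∈ U n → l * z * m ∈ U n := by
    intro n l z m hl hm hz
    have h1 : l * z ∈ (L : Set G) * U n := Set.mul_mem_mul hl hz
    rw [hLU n] at h1
    have h2 : l * z * m ∈ U n * (L : Set G) := Set.mul_mem_mul h1 hm
    rwa [← hUL n] at h2
  have hmemL_iff : ∀ {n : ℕ} {l z m : G}, l ∈ L → m ∈ L → (l * z * m ∈ U n ↔ z ∈ U n) := by
    intro n l z m hl hm
    constructor
    · intro h
      have := hmemL (L.inv_mem hl) (L.inv_mem hm) h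
      simpa [mul_assoc] using this
    · exact hmemL hl hm
  -- the pre-distance on G
  set D : G → G → ℝ≥0 := fun x y =>
    if h : ∃ n, x⁻¹ * y ∉ U (2 * n) then (1 / 2) ^ Nat.find h else 0 with hD
  have hr : (1 / 2 : ℝ≥0) ∈ Set.Ioo (0 : ℝ≥0) 1 :=
    ⟨half_pos one_pos, NNReal.half_lt_self one_ne_zero⟩
  have hle_d : ∀ {x y : G} {n : ℕ}, (1 / 2 : ℝ≥0) ^ n ≤ D x y ↔ x⁻¹ * y ∉ U (2 * n) := by
    intro x y n
    simp only [hD]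
    split_ifs with h
    · rw [(pow_right_strictAnti₀ hr.1 hr.2).le_iff_ge, Nat.find_le_iff]
      constructor
      · rintro ⟨m, hmn, hm⟩ hn
        exact hm (hanti (by omega) hn)
      · exact fun h' => ⟨n, le_rfl, h'⟩
    · push_neg at h
      simp only [h n, not_true, (pow_pos hr.1 _).not_ge]
  have hD0 : ∀ {x y : G}, D x y = 0 ↔ ∀ n, x⁻¹ * y ∈ U n := by
    intro x y
    simp only [hD]
    split_ifs with h
    · constructor
      · intro h0
        exact absurd h0 (by positivity)
      · intro hall
        exact absurd (hall (2 * Nat.find h)) (Nat.find_spec h)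
    · push_neg at h
      simp only [true_iff]
      exact fun n => hanti (by omega : n ≤ 2 * n) (h n)
  have hDself : ∀ x : G, D x x = 0 := fun x => hD0.2 (by simp [hone])
  have hmem_iff : ∀ {n : ℕ} {x y x' y' : G}, x⁻¹ * x' ∈ L → y⁻¹ * y' ∈ L →
      (x'⁻¹ * y' ∈ U n ↔ x⁻¹ * y ∈ U n) := by
    intro n x y x' y' hx hy
    have e : (x⁻¹ * x')⁻¹ * (x⁻¹ * y) * (y⁻¹ * y') = x'⁻¹ * y' := by group
    calc x'⁻¹ * y' ∈ U n
        ↔ (x⁻¹ * x')⁻¹ * (x⁻¹ * y) * (y⁻¹ * y') ∈ U n := by rw [e]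
      _ ↔ x⁻¹ * y ∈ U n := hmemL_iff (L.inv_mem hx) hy
  have hDcomm : ∀ x y : G, D x y = D y x := by
    intro x y
    have key : (fun n => x⁻¹ * y ∉ U (2 * n)) = (fun n => y⁻¹ * x ∉ U (2 * n)) := by
      funext n
      have h2 : x⁻¹ * y ∈ U (2 * n) ↔ y⁻¹ * x ∈ U (2 * n) := by
        rw [hinvmem (n := 2 * n) (z := x⁻¹ * y), mul_inv_rev, inv_inv]
      simp [h2]
    simp only [hD, key]
  have hDwell : ∀ x y x' y' : G, x⁻¹ * x' ∈ L → y⁻¹ * y' ∈ L → D x y = D x' y' := by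
    intro x y x' y' hx hy
    have key : (fun n => x⁻¹ * y ∉ U (2 * n)) = (fun n => x'⁻¹ * y' ∉ U (2 * n)) := by
      funext n
      simp [hmem_iff hx hy]
    simp only [hD, key]
  have hDinv : ∀ (g x y : G), D (g * x) (g * y) = D x y := by
    intro g x y
    have : (g * x)⁻¹ * (g * y) = x⁻¹ * y := by group
    simp only [hD, this]
  -- descend to the quotient
  set ρ : (G ⧸ L) → (G ⧸ L) → ℝ≥0 := Quotient.lift₂ D
    (fun x y x' y' hx hy => hDwell x y x' y'
      (QuotientGroup.leftRel_apply.1 hx) (QuotientGroup.leftRel_apply.1 hy)) with hρ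
  have hρmk : ∀ x y : G, ρ (QuotientGroup.mk x) (QuotientGroup.mk y) = D x y := fun _ _ => rfl
  have hρself : ∀ a : G ⧸ L, ρ a a = 0 := by
    intro a; induction a using QuotientGroup.induction_on with
    | H x => exact hDself x
  have hρcomm : ∀ a b : G ⧸ L, ρ a b = ρ b a := by
    intro a b
    induction a using QuotientGroup.induction_on with
    | H x =>
      induction b using QuotientGroup.induction_on with
      | H y => exact hDcomm x y
  letI I : PseudoMetricSpace (G ⧸ L) := PseudoMetricSpace.ofPreNNDist ρ hρself hρcomm
  set d : (G ⧸ L) → (G ⧸ L) → ℝ := fun a b => @dist _ I.toDist a b with hd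
  have hdist_le : ∀ a b, d a b ≤ ρ a b := PseudoMetricSpace.dist_ofPreNNDist_le ρ hρself hρcomm
  -- the doubling condition
  have hd_le : ∀ a b, (ρ a b : ℝ) ≤ 2 * d a b := by
    refine PseudoMetricSpace.le_two_mul_dist_ofPreNNDist ρ hρself hρcomm ?_
    intro a₁ a₂ a₃ a₄
    induction a₁ using QuotientGroup.induction_on with | H x₁ => ?_
    induction a₂ using QuotientGroup.induction_on with | H x₂ => ?_
    induction a₃ using QuotientGroup.induction_on with | H x₃ => ?_
    induction a₄ using QuotientGroup.induction_on with | H x₄ => ?_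
    simp only [hρmk]
    by_cases H : ∃ n, x₁⁻¹ * x₄ ∉ U (2 * n)
    · rw [show D x₁ x₄ = (1 / 2) ^ Nat.find H from dif_pos H]
      rw [← div_le_iff₀' zero_lt_two, ← mul_one_div ((1 / 2 : ℝ≥0) ^ _), ← pow_succ]
      simp only [le_max_iff, hle_d, ← not_and_or]
      rintro ⟨h₁₂, h₂₃, h₃₄⟩
      refine Nat.find_spec H ?_
      set N := Nat.find H
      have e : x₁⁻¹ * x₄ = (x₁⁻¹ * x₂) * (x₂⁻¹ * x₃) * (x₃⁻¹ * x₄) := by group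
      have h1 : (x₁⁻¹ * x₂) * (x₂⁻¹ * x₃) ∈ U (2 * N + 1) := by
        have := hsq (2 * N + 1) (Set.mul_mem_mul
          (hanti (by omega : 2 * N + 2 ≤ 2 * (N + 1)) h₁₂)
          (hanti (by omega : 2 * N + 2 ≤ 2 * (N + 1)) h₂₃))
        exact this
      have h2 : x₁⁻¹ * x₄ ∈ U (2 * N) := by
        rw [e]
        exact hsq (2 * N) (Set.mul_mem_mul h1
          (hanti (by omega : 2 * N + 1 ≤ 2 * (N + 1)) h₃₄))
      exact h2
    · simp only [hD]
      rw [dif_neg H]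
      exact zero_le
  -- zero iff equal
  have hzero : ∀ a b : G ⧸ L, d a b = 0 ↔ a = b := by
    intro a b
    constructor
    · intro h0
      have hρ0 : ρ a b = 0 := by
        have := hd_le a b
        rw [h0, mul_zero] at this
        exact le_antisymm (by exact_mod_cast this) zero_le
      induction a using QuotientGroup.induction_on with | H x => ?_
      induction b using QuotientGroup.induction_on with | H y => ?_
      rw [hρmk] at hρ0
      have hall : ∀ n, x⁻¹ * y ∈ U n := hD0.1 hρ0
      have hxy : x⁻¹ * y ∈ L := by
        by_contra hxy
        obtain ⟨V, W, hV, hW, hLV, hzW, hdisj⟩ := hL.separation_of_notMem hxy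
        obtain ⟨n, hn⟩ := hbase V hV hLV
        exact absurd (hn (hall n)) (fun hmem => hdisj.ne_of_mem hmem hzW rfl)
      exact Quotient.sound (QuotientGroup.leftRel_apply.2 hxy)
    · rintro rfl
      exact @dist_self _ I a
  refine ⟨d, hzero, fun a b => @dist_comm _ I a b, fun a b c => @dist_triangle _ I a b c, ?_, ?_⟩
  · -- the topology
    intro a s
    induction a using QuotientGroup.induction_on with | H x => ?_
    constructor
    · intro hs
      obtain ⟨t, hts, htopen, hxt⟩ := mem_nhds_iff.1 hs
      have hpre : IsOpen ((QuotientGroup.mk : G → G ⧸ L) ⁻¹' t) :=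
        (QuotientGroup.isQuotientMap_mk L).continuous.isOpen_preimage t htopen
      have hsat : ∀ w ∈ (QuotientGroup.mk : G → G ⧸ L) ⁻¹' t, ∀ l ∈ L,
          w * l ∈ (QuotientGroup.mk : G → G ⧸ L) ⁻¹' t := by
        intro w hw l hl
        have hrel : (QuotientGroup.mk (w * l) : G ⧸ L) = QuotientGroup.mk w := by
          refine QuotientGroup.eq.2 ?_
          have he : (w * l)⁻¹ * w = l⁻¹ := by group
          rw [he]
          exact L.inv_mem hl
        simpa [Set.mem_preimage, hrel] using hw
      have hLsub : (L : Set G) ⊆ (x⁻¹ * ·) '' ((QuotientGroup.mk : G → G ⧸ L) ⁻¹' t) := by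
        intro l hl
        refine ⟨x * l, ?_, by group⟩
        have hx1 : x ∈ (QuotientGroup.mk : G → G ⧸ L) ⁻¹' t := hxt
        exact hsat x hx1 l hl
      have hOopen : IsOpen ((x⁻¹ * ·) '' ((QuotientGroup.mk : G → G ⧸ L) ⁻¹' t)) :=
        isOpenMap_mul_left x⁻¹ _ hpre
      obtain ⟨n, hn⟩ := hbase _ hOopen hLsub
      refine ⟨(1 / 2 : ℝ) ^ (n + 1), by positivity, ?_⟩
      intro b hb
      induction b using QuotientGroup.induction_on with | H y => ?_
      have hρb : (ρ (QuotientGroup.mk x) (QuotientGroup.mk y) : ℝ) < 2 * (1 / 2) ^ (n + 1) :=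
        lt_of_le_of_lt (hd_le _ _) (by
          have := hb
          simp only [Set.mem_setOf_eq] at this
          linarith)
      have h2 : (2 : ℝ) * (1 / 2) ^ (n + 1) = (1 / 2) ^ n := by ring
      rw [h2, hρmk] at hρb
      have hmem : x⁻¹ * y ∈ U (2 * n) := by
        by_contra hmem
        have := hle_d.2 hmem
        have : ((1 / 2 : ℝ≥0) ^ n : ℝ) ≤ (D x y : ℝ) := by exact_mod_cast this
        simp only [NNReal.coe_pow, NNReal.coe_div, NNReal.coe_one, NNReal.coe_ofNat] at this
        linarith
      have hmem' : x⁻¹ * y ∈ U n := hanti (by omega : n ≤ 2 * n) hmem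
      obtain ⟨w, hw, hwe⟩ := hn hmem'
      have : y = w := by
        have : x⁻¹ * w = x⁻¹ * y := hwe
        exact (mul_left_cancel this).symm
      subst this
      exact hts hw
    · rintro ⟨ε, hε, hball⟩
      obtain ⟨m, hm⟩ := exists_pow_lt_of_lt_one hε (by norm_num : (1 / 2 : ℝ) < 1)
      have hopen' : IsOpen ((QuotientGroup.mk : G → G ⧸ L) '' ((x * ·) '' U (2 * m))) :=
        QuotientGroup.isOpenMap_coe _ (isOpenMap_mul_left x _ (hopen _).1)
      have hxmem : (QuotientGroup.mk x : G ⧸ L) ∈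
          (QuotientGroup.mk : G → G ⧸ L) '' ((x * ·) '' U (2 * m)) :=
        ⟨x, ⟨1, hone _, by group⟩, rfl⟩
      refine Filter.mem_of_superset (hopen'.mem_nhds hxmem) ?_
      rintro b ⟨w, ⟨u, hu, rfl⟩, rfl⟩
      refine hball ?_
      have hDxu : D x (x * u) < (1 / 2) ^ m := by
        by_contra hge
        push_neg at hge
        have := hle_d.1 hge
        exact this (by simpa using hu)
      have : d (QuotientGroup.mk x) (QuotientGroup.mk (x * u)) < ε := by
        refine lt_of_le_of_lt (hdist_le _ _) ?_
        rw [hρmk]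
        refine lt_of_lt_of_le ?_ hm.le
        exact_mod_cast hDxu
      exact this
  · -- invariance
    intro g a b
    induction a using QuotientGroup.induction_on with | H x => ?_
    induction b using QuotientGroup.induction_on with | H y => ?_
    have hsmul : ∀ z : G, g • (QuotientGroup.mk z : G ⧸ L) = QuotientGroup.mk (g * z) := fun z => rfl
    have hρinv : (fun a b : G ⧸ L => ρ (g • a) (g • b)) = ρ := by
      funext a b
      induction a using QuotientGroup.induction_on with | H p => ?_
      induction b using QuotientGroup.induction_on with | H q => ?_
      rw [hsmul, hsmul, hρmk, hρmk]
      exact hDinv g p q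
    show @dist _ I.toDist (g • (QuotientGroup.mk x : G ⧸ L)) (g • (QuotientGroup.mk y : G ⧸ L))
        = @dist _ I.toDist (QuotientGroup.mk x) (QuotientGroup.mk y)
    rw [PseudoMetricSpace.dist_ofPreNNDist ρ hρself hρcomm,
      PseudoMetricSpace.dist_ofPreNNDist ρ hρself hρcomm]
    congr 1
    have hsurj : Function.Surjective (List.map (fun a : G ⧸ L => g⁻¹ • a)) := by
      intro l
      refine ⟨l.map (fun a => g • a), ?_⟩
      rw [List.map_map]
      have he : ((fun a : G ⧸ L => g⁻¹ • a) ∘ fun a : G ⧸ L => g • a) = id := by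
        funext a; simp [smul_smul]
      rw [he, List.map_id]
    refine hsurj.iInf_congr _ fun l => ?_
    have h1 : (g • (QuotientGroup.mk x : G ⧸ L)) :: l
        = (((QuotientGroup.mk x : G ⧸ L)) :: l.map (fun a => g⁻¹ • a)).map
            (fun a => g • a) := by
      simp [List.map_map, Function.comp_def, smul_smul]
    have h2 : l ++ [g • (QuotientGroup.mk y : G ⧸ L)]
        = (l.map (fun a : G ⧸ L => g⁻¹ • a) ++ [(QuotientGroup.mk y : G ⧸ L)]).map
            (fun a => g • a) := by
      simp [List.map_map, Function.comp_def, smul_smul]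
    rw [h1, h2, List.zipWith_map, hρinv]
end

section
/- In an almost metrizable ω-narrow Hausdorff topological group G, the family 𝒩 of compact normal subgroups K with G/K metrizable is closed under countable intersections: if K_n ∈ 𝒩 for n ∈ ℕ, then ⋂ K_n ∈ 𝒩. -/
open Pointwise Filter Set

/-- Two compact sets in a Hausdorff topological group can be thickened while keeping the
intersection inside a given open set. -/
theorem sep_two {G : Type*} [Group G] [TopologicalSpace G] [IsTopologicalGroup G] [T2Space G]
    {C D O : Set G} (hC : IsCompact C) (hD : IsCompact D) (hO : IsOpen O)
    (h : C ∩ D ⊆ O) : ∃ W ∈ nhds (1 : G), (C * W) ∩ (D * W) ⊆ O := by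
  have key : ∀ p : G × G, ∃ W ∈ nhds (1 : G),
      p ∈ C ×ˢ D → (p.1 • (W * W)) ∩ (p.2 • (W * W)) ⊆ O := by
    rintro ⟨a, b⟩
    by_cases hab : a = b
    · by_cases hmem : (a, b) ∈ C ×ˢ D
      · have haO : a ∈ O := h ⟨hmem.1, hab ▸ hmem.2⟩
        have : a⁻¹ • O ∈ nhds (1 : G) := by
          have := smul_mem_nhds_smul a⁻¹ (hO.mem_nhds haO)
          simpa using this
        obtain ⟨W, hWo, hW1, hWW⟩ := exists_open_nhds_one_mul_subset this
        refine ⟨W, hWo.mem_nhds hW1, fun _ => ?_⟩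
        intro x hx
        have : a • (W * W) ⊆ O := by
          intro y hy
          obtain ⟨z, hz, rfl⟩ := hy
          have := hWW hz
          simpa using smul_mem_smul_set (a := a) this
        subst hab
        exact this hx.1
      · exact ⟨univ, univ_mem, fun hm => absurd hm hmem⟩
    · obtain ⟨u, v, hu, hv, hau, hbv, huv⟩ := t2_separation hab
      have hu1 : a⁻¹ • u ∈ nhds (1 : G) := by
        have := smul_mem_nhds_smul a⁻¹ (hu.mem_nhds hau); simpa using this
      have hv1 : b⁻¹ • v ∈ nhds (1 : G) := by
        have := smul_mem_nhds_smul b⁻¹ (hv.mem_nhds hbv); simpa using this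
      obtain ⟨Wa, hWao, hWa1, hWaa⟩ := exists_open_nhds_one_mul_subset hu1
      obtain ⟨Wb, hWbo, hWb1, hWbb⟩ := exists_open_nhds_one_mul_subset hv1
      refine ⟨Wa ∩ Wb, (hWao.inter hWbo).mem_nhds ⟨hWa1, hWb1⟩, fun _ => ?_⟩
      intro x hx
      exfalso
      have hxu : (⟨a, b⟩ : G × G).1 • ((Wa ∩ Wb) * (Wa ∩ Wb)) ⊆ u := by
        intro y hy
        obtain ⟨z, hz, rfl⟩ := hy
        have : z ∈ a⁻¹ • u := hWaa (mul_subset_mul inter_subset_left inter_subset_left hz)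
        simpa using smul_mem_smul_set (a := a) this
      have hxv : (⟨a, b⟩ : G × G).2 • ((Wa ∩ Wb) * (Wa ∩ Wb)) ⊆ v := by
        intro y hy
        obtain ⟨z, hz, rfl⟩ := hy
        have : z ∈ b⁻¹ • v := hWbb (mul_subset_mul inter_subset_right inter_subset_right hz)
        simpa using smul_mem_smul_set (a := b) this
      exact huv.le_bot ⟨hxu hx.1, hxv hx.2⟩
  choose W hWmem hWsub using key
  obtain ⟨t, ht⟩ := (hC.prod hD).elim_nhds_subcover'
    (fun p _ => (p.1 • W p) ×ˢ (p.2 • W p))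
    (fun p _ => prod_mem_nhds (by simpa using smul_mem_nhds_smul p.1 (hWmem p))
      (by simpa using smul_mem_nhds_smul p.2 (hWmem p)))
  refine ⟨⋂ p ∈ t, W p, (biInter_finset_mem t).2 fun p _ => hWmem p, ?_⟩
  rintro x ⟨hx1, hx2⟩
  obtain ⟨c1, hc1, w1, hw1, rfl⟩ := hx1
  obtain ⟨c2, hc2, w2, hw2, hx⟩ := hx2
  have hcd : (c1, c2) ∈ C ×ˢ D := ⟨hc1, hc2⟩
  obtain ⟨p, hp, hmem⟩ := mem_iUnion₂.1 (ht hcd)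
  have hWsub' : ∀ w ∈ ⋂ q ∈ t, W ↑q, w ∈ W ↑p := fun w hw => (biInter_subset_of_mem hp) hw
  obtain ⟨y1, hy1, rfl⟩ := hmem.1
  obtain ⟨y2, hy2, hc2eq⟩ := hmem.2
  refine hWsub ↑p p.2 ⟨?_, ?_⟩
  · exact ⟨y1 * w1, mul_mem_mul hy1 (hWsub' _ hw1), by simp [mul_assoc]⟩
  · refine ⟨y2 * w2, mul_mem_mul hy2 (hWsub' _ hw2), ?_⟩
    simp only [smul_eq_mul] at hc2eq hx ⊢
    rw [← mul_assoc, hc2eq, hx]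

theorem sep_finset {G : Type*} [Group G] [TopologicalSpace G] [IsTopologicalGroup G] [T2Space G]
    {ι : Type*} [DecidableEq ι] (u : Finset ι) (C : ι → Set G)
    (hC : ∀ i ∈ u, IsCompact (C i))
    {O : Set G} (hO : IsOpen O) (h : (⋂ i ∈ u, C i) ⊆ O) :
    ∃ W ∈ nhds (1 : G), (⋂ i ∈ u, C i * W) ⊆ O := by
  revert hC h
  induction u using Finset.induction_on generalizing O with
  | empty => exact fun _ h => ⟨univ, univ_mem, by simpa using h⟩
  | insert a u ha ih =>
    intro hC h
    rcases u.eq_empty_or_nonempty with rfl | ⟨i₀, hi₀⟩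
    · simp only [Finset.set_biInter_insert, Finset.notMem_empty, Set.iInter_of_empty,
        Set.iInter_univ, Set.inter_univ] at h ⊢
      obtain ⟨W, hW, hsub⟩ :=
        compact_open_separated_mul_right (hC a (Finset.mem_insert_self a ∅)) hO
          (by simpa using h)
      refine ⟨W, hW, by simpa using hsub⟩
    · set D := ⋂ i ∈ u, C i with hD
      have hDcomp : IsCompact D :=
        IsCompact.of_isClosed_subset (hC i₀ (Finset.mem_insert_of_mem hi₀))
          (isClosed_biInter fun i hi => (hC i (Finset.mem_insert_of_mem hi)).isClosed)
          (biInter_subset_of_mem hi₀)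
      have hsub : C a ∩ D ⊆ O := by
        rw [Finset.set_biInter_insert] at h; exact h
      obtain ⟨W1, hW1, hsub1⟩ := sep_two (hC a (Finset.mem_insert_self a u)) hDcomp hO hsub
      obtain ⟨V, hVsub, hVo, hV1⟩ := mem_nhds_iff.1 hW1
      have hDV : IsOpen (D * V) := hVo.mul_left
      have hDsub : D ⊆ D * V := fun x hx => ⟨x, hx, 1, hV1, mul_one x⟩
      obtain ⟨W2, hW2, hsub2⟩ := ih hDV (fun i hi => hC i (Finset.mem_insert_of_mem hi)) hDsub
      refine ⟨V ∩ W2, inter_mem (hVo.mem_nhds hV1) hW2, ?_⟩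
      intro x hx
      rw [Finset.set_biInter_insert] at hx
      have hxa : x ∈ C a * W1 :=
        mul_subset_mul_left (inter_subset_left.trans hVsub) hx.1
      have hxD : x ∈ D * W1 := by
        have h2 : x ∈ ⋂ i ∈ u, C i * W2 :=
          (Set.iInter₂_mono fun i _ => mul_subset_mul_left inter_subset_right) hx.2
        exact mul_subset_mul_left hVsub (hsub2 h2)
      exact hsub1 ⟨hxa, hxD⟩

/-- In an ω-narrow almost metrizable Hausdorff topological group, the family of compact
normal subgroups with metrizable quotient is closed under countable intersections. -/
theorem countable_inter_of_compact_normal_metrizable {G : Type*} [Group G]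
    [TopologicalSpace G] [IsTopologicalGroup G] [T2Space G]
    (hnarrow : ∀ U ∈ nhds (1 : G), ∃ A : Set G, A.Countable ∧ A * U = Set.univ)
    (halm : ∀ O ∈ nhds (1 : G), ∃ L : Subgroup G, (L : Set G) ⊆ O ∧
      IsCompact (L : Set G) ∧ TopologicalSpace.MetrizableSpace (G ⧸ L))
    (K : ℕ → Subgroup G)
    (hK : ∀ n, IsCompact ((K n : Set G)) ∧ (K n).Normal ∧
      TopologicalSpace.MetrizableSpace (G ⧸ K n)) :
    IsCompact ((⨅ n, K n : Subgroup G) : Set G) ∧ (⨅ n, K n : Subgroup G).Normal ∧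
      TopologicalSpace.MetrizableSpace (G ⧸ (⨅ n, K n : Subgroup G)) := by
  classical
  set N : Subgroup G := ⨅ n, K n with hNdef
  have hNset : (N : Set G) = ⋂ n, (K n : Set G) := Subgroup.coe_iInf
  have hNcompact : IsCompact (N : Set G) := by
    rw [hNset]
    exact IsCompact.of_isClosed_subset (hK 0).1
      (isClosed_iInter fun n => (hK n).1.isClosed) (Set.iInter_subset _ 0)
  have hNnormal : N.Normal := by
    constructor
    intro g hg x
    rw [hNdef, Subgroup.mem_iInf] at hg ⊢
    exact fun n => (hK n).2.1.conj_mem g (hg n) x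
  refine ⟨hNcompact, hNnormal, ?_⟩
  haveI := hNnormal
  haveI : IsClosed (N : Set G) := hNcompact.isClosed
  haveI : T3Space (G ⧸ N) := QuotientGroup.instT3Space N
  -- countable neighborhood bases for each `K n`
  haveI : ∀ n, TopologicalSpace.MetrizableSpace (G ⧸ K n) := fun n => (hK n).2.2
  have hbasis : ∀ n : ℕ, ∃ Wb : ℕ → Set (G ⧸ K n),
      (nhds (((1 : G) : G ⧸ K n))).HasAntitoneBasis Wb := fun n =>
    (nhds (((1 : G) : G ⧸ K n))).exists_antitone_basis
  choose Wb hWb using hbasis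
  set U : ℕ → ℕ → Set G :=
    fun n m => (QuotientGroup.mk : G → G ⧸ K n) ⁻¹' (Wb n m) with hUdef
  have hUnhds : ∀ n m, U n m ∈ nhds (1 : G) := by
    intro n m
    exact QuotientGroup.continuous_mk.continuousAt.preimage_mem_nhds
      ((hWb n).mem m)
  -- the key claim: finite intersections of the `U n m` form a base of `N`-saturated nbhds
  have key : ∀ V ∈ nhds (1 : G), ∃ F : Finset (ℕ × ℕ),
      (⋂ p ∈ F, U p.1 p.2) ⊆ (N : Set G) * V := by
    intro V hV
    obtain ⟨Vo, hVoV, hVoo, hVo1⟩ := mem_nhds_iff.1 hV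
    have hOopen : IsOpen ((N : Set G) * Vo) := hVoo.mul_left
    have hNsubO : (N : Set G) ⊆ (N : Set G) * Vo :=
      fun x hx => ⟨x, hx, 1, hVo1, mul_one x⟩
    -- Step 1: finitely many `K i` already intersect inside `N * Vo`
    have hstep1 : ∃ u : Finset ℕ, (⋂ i ∈ insert 0 u, (K i : Set G)) ⊆ (N : Set G) * Vo := by
      have hcpt : IsCompact ((K 0 : Set G) ∩ ((N : Set G) * Vo)ᶜ) :=
        (hK 0).1.inter_right hOopen.isClosed_compl
      have hempty : ((K 0 : Set G) ∩ ((N : Set G) * Vo)ᶜ) ∩ ⋂ i, (K i : Set G) = ∅ := by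
        rw [← hNset]
        apply Set.eq_empty_of_forall_notMem
        rintro x ⟨⟨-, hxc⟩, hxN⟩
        exact hxc (hNsubO hxN)
      obtain ⟨u, hu⟩ := hcpt.elim_finite_subfamily_closed (fun i => (K i : Set G))
        (fun i => (hK i).1.isClosed) hempty
      refine ⟨u, ?_⟩
      intro x hx
      rw [Finset.set_biInter_insert] at hx
      by_contra hxO
      exact Set.eq_empty_iff_forall_notMem.1 hu x
        ⟨⟨hx.1, hxO⟩, Set.mem_iInter₂.2 fun i hi => Set.mem_iInter₂.1 hx.2 i hi⟩
    obtain ⟨u, hu⟩ := hstep1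
    set u' : Finset ℕ := insert 0 u with hu'def
    -- Step 2: thicken
    obtain ⟨W, hWnhds, hWsub⟩ := sep_finset u' (fun i => (K i : Set G))
      (fun i _ => (hK i).1) hOopen hu
    -- Step 3: trap each `K i * W` using the countable bases
    have hstep3 : ∀ i : ℕ, ∃ m : ℕ, U i m ⊆ (K i : Set G) * W := by
      intro i
      have himg : (QuotientGroup.mk '' ((K i : Set G) * W) : Set (G ⧸ K i)) ∈
          nhds (((1 : G) : G ⧸ K i)) := by
        rw [QuotientGroup.nhds_eq]
        exact Filter.mem_map.2 (Filter.mem_of_superset hWnhds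
          (fun w hw => Set.subset_preimage_image _ _ ⟨1, (K i).one_mem, w, hw, one_mul w⟩))
      obtain ⟨m, -, hm⟩ := (hWb i).toHasBasis.mem_iff.1 himg
      refine ⟨m, ?_⟩
      intro x hx
      have : (x : G ⧸ K i) ∈ QuotientGroup.mk '' ((K i : Set G) * W) := hm hx
      obtain ⟨y, hy, hxy⟩ := this
      obtain ⟨k, hk, w, hw, rfl⟩ := hy
      have hkx : (k * w)⁻¹ * x ∈ K i := QuotientGroup.eq.mp hxy
      -- x = k * w * k'  with k' ∈ K i ; rewrite as (k * (w k' w⁻¹)) * w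
      refine ⟨k * (w * ((k * w)⁻¹ * x) * w⁻¹), ?_, w, hw, by group⟩
      exact (K i).mul_mem hk ((hK i).2.1.conj_mem _ hkx w)
    choose m hm using hstep3
    refine ⟨u'.image (fun i => (i, m i)), ?_⟩
    intro x hx
    have hxi : ∀ i ∈ u', x ∈ (K i : Set G) * W := by
      intro i hi
      exact hm i (Set.mem_iInter₂.1 hx (i, m i) (Finset.mem_image_of_mem _ hi))
    exact Set.mul_subset_mul_left hVoV (hWsub (Set.mem_iInter₂.2 hxi))
  -- countably generated neighborhoods of 1 in the quotient
  haveI hNcg : (nhds (1 : G ⧸ N)).IsCountablyGenerated := by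
    have hbase : (nhds (1 : G ⧸ N)).HasBasis (fun _ : Finset (ℕ × ℕ) => True)
        (fun F => QuotientGroup.mk '' (⋂ p ∈ F, U p.1 p.2)) := by
      constructor
      intro T
      constructor
      · intro hT
        rw [show (1 : G ⧸ N) = ((1 : G) : G ⧸ N) from rfl, QuotientGroup.nhds_eq] at hT
        have hV : (QuotientGroup.mk : G → G ⧸ N) ⁻¹' T ∈ nhds (1 : G) := hT
        obtain ⟨F, hF⟩ := key _ hV
        refine ⟨F, trivial, ?_⟩
        rintro z ⟨x, hx, rfl⟩
        obtain ⟨n, hn, v, hv, rfl⟩ := hF hx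
        have : ((n * v : G) : G ⧸ N) = ((v : G) : G ⧸ N) := by
          rw [QuotientGroup.eq]
          simpa using hNnormal.conj_mem n⁻¹ ((N : Subgroup G).inv_mem hn) v⁻¹
        rw [this]
        exact hv
      · rintro ⟨F, -, hF⟩
        refine Filter.mem_of_superset ?_ hF
        rw [show (1 : G ⧸ N) = ((1 : G) : G ⧸ N) from rfl, QuotientGroup.nhds_eq]
        exact Filter.mem_map.2 (Filter.mem_of_superset
          ((Filter.biInter_finset_mem F).2 fun p _ => hUnhds p.1 p.2)
          (Set.subset_preimage_image _ _))
    exact hbase.isCountablyGenerated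
  -- metrize
  letI : UniformSpace (G ⧸ N) := IsTopologicalGroup.rightUniformSpace (G ⧸ N)
  haveI : (uniformity (G ⧸ N)).IsCountablyGenerated := by
    rw [uniformity_eq_comap_nhds_one']
    exact Filter.comap.isCountablyGenerated _ _
  exact UniformSpace.metrizableSpace
end
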